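/- Let B be a family of blocks in a monoid M with parameter type Θ and let n ≥ 1. For every parameter assignment θ for the triangle T_n and every parameter assignment φ for the zigzag L_{1,n}, there exists a parameter assignment ψ such that T_n(θ) * L_{1,n}(φ) = T_n(ψ); that is, a triangle of height n and a zigzag of height n can be merged into a triangle of height n. -/

import Mathlib

/-- The cascade `C_{i,j}(θ) = B i (θ i) * B (i+1) (θ (i+1)) * ⋯ * B j (θ j)`. -/
def cascade {M Θ : Type*} [Monoid M] (B : ℕ → Θ → M) (i j : ℕ) (θ : ℕ → Θ) : M :=
  ((List.range (j + 1 - i)).map (fun k => B (i + k) (θ (i + k)))).prod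

/-- The triangle `T_n(θ) = C_{n,n} * C_{n-1,n} * ⋯ * C_{1,n}`, where the `k`-th cascade
`C_{n-k,n}` carries its own parameters `θ k`. -/
def triangle {M Θ : Type*} [Monoid M] (B : ℕ → Θ → M) (n : ℕ) (θ : ℕ → ℕ → Θ) : M :=
  ((List.range n).map (fun k => cascade B (n - k) n (θ k))).prod

/-- The zigzag `L_{1,n}(θ)`: the product of the odd-indexed blocks `B k (θ k)` for
`1 ≤ k ≤ n` (in increasing order of `k`), followed by the product of the even-indexed
blocks `B k (θ k)` for `1 ≤ k ≤ n` (in increasing order of `k`). -/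
def zigzag {M Θ : Type*} [Monoid M] (B : ℕ → Θ → M) (n : ℕ) (θ : ℕ → Θ) : M :=
  (((((List.range n).map (· + 1)).filter (fun k => k % 2 = 1)).map
      (fun k => B k (θ k))).prod) *
  (((((List.range n).map (· + 1)).filter (fun k => k % 2 = 0)).map
      (fun k => B k (θ k))).prod)

section
variable {M Θ : Type*} [Monoid M] (B : ℕ → Θ → M)

lemma cascade_congr {i j : ℕ} {θ ψ : ℕ → Θ} (h : ∀ k, i ≤ k → k ≤ j → θ k = ψ k) :
    cascade B i j θ = cascade B i j ψ := by
  unfold cascade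
  congr 1
  apply List.map_congr_left
  intro a ha
  rw [List.mem_range] at ha
  rw [h (i + a) (Nat.le_add_right _ _) (by omega)]

lemma cascade_split (i m j : ℕ) (h1 : i ≤ m + 1) (h2 : m ≤ j) (θ : ℕ → Θ) :
    cascade B i j θ = cascade B i m θ * cascade B (m + 1) j θ := by
  unfold cascade
  rw [show j + 1 - i = (m + 1 - i) + (j - m) by omega, List.range_add,
      List.map_append, List.prod_append]
  congr 1
  rw [show j + 1 - (m + 1) = j - m by omega, List.map_map]
  refine congrArg List.prod (List.map_congr_left ?_)
  intro a _
  simp only [Function.comp_apply]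
  rw [show i + (m + 1 - i + a) = m + 1 + a by omega]

lemma cascade_single (m : ℕ) (θ : ℕ → Θ) : cascade B m m θ = B m (θ m) := by
  unfold cascade
  rw [show m + 1 - m = 1 by omega, show List.range 1 = [0] from rfl]
  simp

lemma cascade_pair (m : ℕ) (θ : ℕ → Θ) :
    cascade B m (m + 1) θ = B m (θ m) * B (m + 1) (θ (m + 1)) := by
  rw [cascade_split B m m (m+1) (by omega) (by omega), cascade_single, cascade_single]

lemma cascade_eq_map (i j : ℕ) (θ : ℕ → Θ) :
    cascade B i j θ = (((List.range (j + 1 - i)).map (fun k => i + k)).map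
      (fun k => B k (θ k))).prod := by
  rw [List.map_map]; rfl

lemma block_comm_list
    (hcomm : ∀ (i j : ℕ), 1 < Nat.dist i j → ∀ (α β : Θ), B i α * B j β = B j β * B i α) (m : ℕ) (α : Θ) (θ : ℕ → Θ) :
    ∀ (l : List ℕ), (∀ k ∈ l, 1 < Nat.dist m k) →
      B m α * (l.map (fun k => B k (θ k))).prod
        = (l.map (fun k => B k (θ k))).prod * B m α := by
  intro l
  induction l with
  | nil => simp
  | cons a l ih =>
    intro h
    simp only [List.map_cons, List.prod_cons]
    rw [← mul_assoc, hcomm m a (h a (List.mem_cons_self)) α (θ a), mul_assoc,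
      ih (fun k hk => h k (List.mem_cons_of_mem a hk)), ← mul_assoc]

lemma block_comm_cascade
    (hcomm : ∀ (i j : ℕ), 1 < Nat.dist i j → ∀ (α β : Θ), B i α * B j β = B j β * B i α)
    (m : ℕ) (α : Θ) (θ : ℕ → Θ) (p q : ℕ)
    (h : ∀ k, p ≤ k → k ≤ q → 1 < Nat.dist m k) :
    B m α * cascade B p q θ = cascade B p q θ * B m α := by
  rw [cascade_eq_map]
  apply block_comm_list B hcomm
  intro k hk
  simp only [List.mem_map, List.mem_range] at hk
  obtain ⟨a, ha, rfl⟩ := hk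
  exact h _ (Nat.le_add_right _ _) (by omega)

lemma cascade_mul_top
    (hfusion : ∀ (i : ℕ) (α β : Θ), ∃ a : Θ, B i α * B i β = B i a)
    (n i : ℕ) (hn : 1 ≤ n) (hi : i ≤ n) (θ : ℕ → Θ) (α : Θ) :
    ∃ ψ : ℕ → Θ, cascade B i n θ * B n α = cascade B i n ψ := by
  obtain ⟨a, ha⟩ := hfusion n (θ n) α
  refine ⟨Function.update θ n a, ?_⟩
  have hsplit : ∀ ρ : ℕ → Θ, cascade B i n ρ = cascade B i (n - 1) ρ * B n (ρ n) := by
    intro ρ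
    rw [cascade_split B i (n - 1) n (by omega) (by omega), show n - 1 + 1 = n by omega,
      cascade_single]
  rw [hsplit, hsplit, mul_assoc, ha, Function.update_self]
  congr 1
  · apply cascade_congr
    intro k hk1 hk2
    rw [Function.update_of_ne (by omega)]

lemma cascade_mul_escape
    (hcomm : ∀ (i j : ℕ), 1 < Nat.dist i j → ∀ (α β : Θ), B i α * B j β = B j β * B i α)
    (hturnover : ∀ (i : ℕ) (α β γ : Θ), ∃ a b c : Θ,
      B i α * B (i + 1) β * B i γ = B (i + 1) a * B i b * B (i + 1) c)
    (n i m : ℕ) (h1 : 1 ≤ i) (him : i ≤ m) (hmn : m + 1 ≤ n)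
    (θ : ℕ → Θ) (α : Θ) :
    ∃ (β : Θ) (ψ : ℕ → Θ), cascade B i n θ * B m α = B (m + 1) β * cascade B i n ψ := by
  obtain ⟨a, b, c, habc⟩ := hturnover m (θ m) (θ (m + 1)) α
  set ψ : ℕ → Θ := Function.update (Function.update θ m b) (m + 1) c with hψ
  refine ⟨a, ψ, ?_⟩
  have hψm : ψ m = b := by
    rw [hψ, Function.update_of_ne (by omega), Function.update_self]
  have hψm1 : ψ (m + 1) = c := Function.update_self _ _ _
  have hlow : cascade B i (m - 1) θ = cascade B i (m - 1) ψ := by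
    apply cascade_congr; intro k hk1 hk2
    rw [hψ, Function.update_of_ne (by omega), Function.update_of_ne (by omega)]
  have hhigh : cascade B (m + 2) n θ = cascade B (m + 2) n ψ := by
    apply cascade_congr; intro k hk1 hk2
    rw [hψ, Function.update_of_ne (by omega), Function.update_of_ne (by omega)]
  have hsplit : ∀ ρ : ℕ → Θ, cascade B i n ρ =
      cascade B i (m - 1) ρ * (B m (ρ m) * B (m + 1) (ρ (m + 1))) * cascade B (m + 2) n ρ := by
    intro ρ
    rw [cascade_split B i (m + 1) n (by omega) (by omega),
      cascade_split B i (m - 1) (m + 1) (by omega) (by omega),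
      show m - 1 + 1 = m by omega, cascade_pair, show m + 1 + 1 = m + 2 from rfl]
  rw [hsplit θ, hsplit ψ, hψm, hψm1, ← hlow, ← hhigh]
  calc cascade B i (m - 1) θ * (B m (θ m) * B (m + 1) (θ (m + 1))) * cascade B (m + 2) n θ
        * B m α
      = cascade B i (m - 1) θ * (B m (θ m) * B (m + 1) (θ (m + 1))
          * (cascade B (m + 2) n θ * B m α)) := by
        simp only [mul_assoc]
    _ = cascade B i (m - 1) θ * (B m (θ m) * B (m + 1) (θ (m + 1))
          * (B m α * cascade B (m + 2) n θ)) := by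
        rw [← block_comm_cascade B hcomm m α θ (m + 2) n (fun k hk1 hk2 => by
          simp [Nat.dist]; omega)]
    _ = cascade B i (m - 1) θ * (B m (θ m) * B (m + 1) (θ (m + 1)) * B m α)
          * cascade B (m + 2) n θ := by
        simp only [mul_assoc]
    _ = cascade B i (m - 1) θ * (B (m + 1) a * (B m b * B (m + 1) c))
          * cascade B (m + 2) n θ := by
        rw [habc]; simp only [mul_assoc]
    _ = B (m + 1) a * cascade B i (m - 1) θ * (B m b * B (m + 1) c)
          * cascade B (m + 2) n θ := by
        rw [← mul_assoc, block_comm_cascade B hcomm (m + 1) a θ i (m - 1)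
          (fun k hk1 hk2 => by simp [Nat.dist]; omega)]
    _ = B (m + 1) a * (cascade B i (m - 1) θ * (B m b * B (m + 1) c)
          * cascade B (m + 2) n θ) := by
        simp only [mul_assoc]

end

def pt {M Θ : Type*} [Monoid M] (B : ℕ → Θ → M) (n j : ℕ) (θ : ℕ → ℕ → Θ) : M :=
  ((List.range j).map (fun k => cascade B (j - k) n (θ k))).prod

/-- Prepend a parameter row to a family of rows. -/
def fcons {Θ : Type*} (a : ℕ → Θ) (f : ℕ → ℕ → Θ) : ℕ → ℕ → Θ :=
  fun t => Nat.casesOn t a f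

section
variable {M Θ : Type*} [Monoid M] (B : ℕ → Θ → M)

lemma pt_zero (n : ℕ) (θ : ℕ → ℕ → Θ) : pt B n 0 θ = 1 := rfl

lemma pt_succ (n j : ℕ) (θ : ℕ → ℕ → Θ) :
    pt B n (j + 1) θ = cascade B (j + 1) n (θ 0) * pt B n j (fun k => θ (k + 1)) := by
  unfold pt
  rw [List.range_succ_eq_map, List.map_cons, List.prod_cons, List.map_map]
  congr 1
  refine congrArg List.prod (List.map_congr_left ?_)
  intro a _
  simp only [Function.comp_apply]
  rw [show j + 1 - Nat.succ a = j - a by omega]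

lemma pt_succ_fcons (n j : ℕ) (a : ℕ → Θ) (f : ℕ → ℕ → Θ) :
    pt B n (j + 1) (fcons a f) = cascade B (j + 1) n a * pt B n j f := by
  rw [pt_succ]
  rfl

lemma pt_absorb
    (hfusion : ∀ (i : ℕ) (α β : Θ), ∃ a : Θ, B i α * B i β = B i a)
    (hcomm : ∀ (i j : ℕ), 1 < Nat.dist i j → ∀ (α β : Θ), B i α * B j β = B j β * B i α)
    (hturnover : ∀ (i : ℕ) (α β γ : Θ), ∃ a b c : Θ,
      B i α * B (i + 1) β * B i γ = B (i + 1) a * B i b * B (i + 1) c)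
    (n : ℕ) (hn : 1 ≤ n) :
    ∀ (j k : ℕ), 1 ≤ k → k ≤ n → ∀ (θ : ℕ → ℕ → Θ) (α : Θ),
      (k + j ≤ n ∧ ∃ (β : Θ) (ψ : ℕ → ℕ → Θ),
          pt B n j θ * B k α = B (k + j) β * pt B n j ψ) ∨
      (n < k + j ∧ ∃ ψ : ℕ → ℕ → Θ, pt B n j θ * B k α = pt B n j ψ) := by
  intro j
  induction j with
  | zero =>
    intro k hk1 hk2 θ α
    left
    exact ⟨by omega, α, θ, by simp [pt_zero]⟩
  | succ j ih =>
    intro k hk1 hk2 θ α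
    have key : pt B n (j + 1) θ * B k α
        = cascade B (j + 1) n (θ 0) * (pt B n j (fun t => θ (t + 1)) * B k α) := by
      rw [pt_succ, mul_assoc]
    rcases ih k hk1 hk2 (fun t => θ (t + 1)) α with ⟨hle, β, ψ', hβ⟩ | ⟨hlt, ψ', hψ'⟩
    · rcases eq_or_lt_of_le hle with heq | hlt2
      · -- k + j = n : fuse
        obtain ⟨ψ₀, hψ₀⟩ := cascade_mul_top B hfusion n (j + 1) hn (by omega) (θ 0) β
        right
        refine ⟨by omega, fcons ψ₀ ψ', ?_⟩
        rw [key, hβ, ← mul_assoc, heq, hψ₀, pt_succ_fcons]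
      · -- k + j < n : escape as B (k+j+1)
        obtain ⟨β', ψ₀, hesc⟩ := cascade_mul_escape B hcomm hturnover n (j + 1) (k + j)
          (by omega) (by omega) (by omega) (θ 0) β
        left
        refine ⟨by omega, β', fcons ψ₀ ψ', ?_⟩
        rw [key, hβ, ← mul_assoc, hesc, pt_succ_fcons,
          show k + (j + 1) = k + j + 1 from rfl, mul_assoc]
    · right
      refine ⟨by omega, fcons (θ 0) ψ', ?_⟩
      rw [key, hψ', pt_succ_fcons]

end

section
variable {M Θ : Type*} [Monoid M] (B : ℕ → Θ → M)

lemma triangle_eq_pt (n : ℕ) (θ : ℕ → ℕ → Θ) : triangle B n θ = pt B n n θ := rfl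

lemma triangle_mul_block
    (hfusion : ∀ (i : ℕ) (α β : Θ), ∃ a : Θ, B i α * B i β = B i a)
    (hcomm : ∀ (i j : ℕ), 1 < Nat.dist i j → ∀ (α β : Θ), B i α * B j β = B j β * B i α)
    (hturnover : ∀ (i : ℕ) (α β γ : Θ), ∃ a b c : Θ,
      B i α * B (i + 1) β * B i γ = B (i + 1) a * B i b * B (i + 1) c)
    (n : ℕ) (hn : 1 ≤ n) (k : ℕ) (hk1 : 1 ≤ k) (hk2 : k ≤ n) (θ : ℕ → ℕ → Θ) (α : Θ) :
    ∃ ψ : ℕ → ℕ → Θ, triangle B n θ * B k α = triangle B n ψ := by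
  rcases pt_absorb B hfusion hcomm hturnover n hn n k hk1 hk2 θ α with
    ⟨hle, _, _, _⟩ | ⟨_, ψ, hψ⟩
  · omega
  · exact ⟨ψ, by rw [triangle_eq_pt, hψ, triangle_eq_pt]⟩

lemma triangle_mul_word
    (hfusion : ∀ (i : ℕ) (α β : Θ), ∃ a : Θ, B i α * B i β = B i a)
    (hcomm : ∀ (i j : ℕ), 1 < Nat.dist i j → ∀ (α β : Θ), B i α * B j β = B j β * B i α)
    (hturnover : ∀ (i : ℕ) (α β γ : Θ), ∃ a b c : Θ,
      B i α * B (i + 1) β * B i γ = B (i + 1) a * B i b * B (i + 1) c)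
    (n : ℕ) (hn : 1 ≤ n) (φ : ℕ → Θ) :
    ∀ (l : List ℕ), (∀ k ∈ l, 1 ≤ k ∧ k ≤ n) → ∀ θ : ℕ → ℕ → Θ,
      ∃ ψ : ℕ → ℕ → Θ,
        triangle B n θ * (l.map (fun k => B k (φ k))).prod = triangle B n ψ := by
  intro l
  induction l with
  | nil => intro _ θ; exact ⟨θ, by simp⟩
  | cons a l ih =>
    intro h θ
    obtain ⟨ψ₁, hψ₁⟩ := triangle_mul_block B hfusion hcomm hturnover n hn a
      (h a (List.mem_cons_self)).1 (h a (List.mem_cons_self)).2 θ (φ a)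
    obtain ⟨ψ, hψ⟩ := ih (fun k hk => h k (List.mem_cons_of_mem a hk)) ψ₁
    refine ⟨ψ, ?_⟩
    rw [List.map_cons, List.prod_cons, ← mul_assoc, hψ₁, hψ]

end


/-- **Corollary (triangle absorbs zigzag).**  Let `B` be a family of blocks in a monoid `M`
(satisfying fusion, commutation and turnover) and `n ≥ 1`.  A triangle of height `n` and a
zigzag `L_{1,n}` can be merged into a triangle of height `n`. -/
theorem triangle_absorbs_zigzag {M Θ : Type*} [Monoid M] (B : ℕ → Θ → M)
    (hfusion : ∀ (i : ℕ) (α β : Θ), ∃ a : Θ, B i α * B i β = B i a)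
    (hcomm : ∀ (i j : ℕ), 1 < Nat.dist i j → ∀ (α β : Θ),
      B i α * B j β = B j β * B i α)
    (hturnover : ∀ (i : ℕ) (α β γ : Θ), ∃ a b c : Θ,
      B i α * B (i + 1) β * B i γ = B (i + 1) a * B i b * B (i + 1) c)
    (n : ℕ) (hn : 1 ≤ n) :
    ∀ (θ : ℕ → ℕ → Θ) (φ : ℕ → Θ), ∃ ψ : ℕ → ℕ → Θ,
      triangle B n θ * zigzag B n φ = triangle B n ψ := by
  intro θ φ
  set l₁ := (((List.range n).map (· + 1)).filter (fun k => k % 2 = 1)) with hl₁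
  set l₂ := (((List.range n).map (· + 1)).filter (fun k => k % 2 = 0)) with hl₂
  have hz : zigzag B n φ = ((l₁ ++ l₂).map (fun k => B k (φ k))).prod := by
    rw [List.map_append, List.prod_append]; rfl
  have hmem : ∀ k ∈ l₁ ++ l₂, 1 ≤ k ∧ k ≤ n := by
    intro k hk
    rcases List.mem_append.mp hk with h | h <;>
    · have := List.mem_of_mem_filter h
      simp only [List.mem_map, List.mem_range] at this
      obtain ⟨a, ha, rfl⟩ := this
      omega
  obtain ⟨ψ, hψ⟩ := triangle_mul_word B hfusion hcomm hturnover n hn φ (l₁ ++ l₂) hmem θ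
  exact ⟨ψ, by rw [hz, hψ]⟩
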